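/- Let V be a finite-dimensional complex vector space with a non-degenerate symmetric ℂ-bilinear form C, and let F be a regular semisimple endomorphism of V symmetric with respect to C, with eigen decomposition V = ⊕_α V_α into one-dimensional eigenspaces. Then there exists a unique Hermitian metric h^{can} on V such that (i) h^{can} is compatible with C, and (ii) the decomposition V = ⊕_α V_α is orthogonal with respect to h^{can}. -/

import Mathlib

noncomputable section

variable {V : Type*} [AddCommGroup V] [Module ℂ V] [FiniteDimensional ℂ V]

/-- `h` is a Hermitian metric on the complex vector space `V`:
it is additive and `ℂ`-linear in the first argument, Hermitian-symmetric
(hence conjugate-linear in the second argument), and positive definite. -/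
def IsHermitianMetric (h : V → V → ℂ) : Prop :=
  (∀ u v w : V, h (u + v) w = h u w + h v w) ∧
  (∀ (a : ℂ) (u v : V), h (a • u) v = a * h u v) ∧
  (∀ u v : V, h u v = starRingEnd ℂ (h v u)) ∧
  (∀ v : V, v ≠ 0 → 0 < (h v v).re)

/-- `C` is a non-degenerate symmetric `ℂ`-bilinear form on `V`. -/
def IsNondegSymmBilin (C : V → V → ℂ) : Prop :=
  (∀ u v w : V, C (u + v) w = C u w + C v w) ∧
  (∀ (a : ℂ) (u v : V), C (a • u) v = a * C u v) ∧
  (∀ u v : V, C u v = C v u) ∧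
  (∀ v : V, (∀ u : V, C v u = 0) → v = 0)

/-- `Ψ_h : V → V^*`, `Ψ_h(u)(v) = h(v,u)`; it is conjugate-linear in `u`. -/
def PsiH (h : V → V → ℂ) : V → V → ℂ := fun u v => h v u

/-- The dual Hermitian metric `h^∨` on `V^* `:
`h^∨(f,g) = h(Ψ_h⁻¹(g), Ψ_h⁻¹(f))`. -/
def dualMetric (h : V → V → ℂ) : (V → ℂ) → (V → ℂ) → ℂ :=
  fun f g => h (Function.invFun (PsiH h) g) (Function.invFun (PsiH h) f)

/-- `h` is compatible with the form `C` if `Ψ_C : V → V^*`, `Ψ_C(u) = C(u,·) = C u`,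
is isometric with respect to `h` and `h^∨`, i.e. `h^∨(Ψ_C u, Ψ_C v) = h(u,v)`. -/
def Compatible (h C : V → V → ℂ) : Prop :=
  ∀ u v : V, dualMetric h (C u) (C v) = h u v

/-- Auxiliary: an additive, `ℂ`-homogeneous function takes sums of scaled
vectors to sums. -/
private lemma addSmul_sum {ι : Type*} (s : Finset ι) (f : V → ℂ)
    (hadd : ∀ u v, f (u + v) = f u + f v) (hsmul : ∀ (a : ℂ) u, f (a • u) = a * f u)
    (g : ι → V) (a : ι → ℂ) :
    f (∑ i ∈ s, a i • g i) = ∑ i ∈ s, a i * f (g i) := by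
  classical
  have h0 : f 0 = 0 := by
    have h := hadd 0 0
    rw [add_zero] at h
    exact left_eq_add.mp h
  induction s using Finset.induction with
  | empty => simpa using h0
  | insert _ _ hx ih =>
    rw [Finset.sum_insert hx, hadd, hsmul, ih, Finset.sum_insert hx]

/-- Auxiliary: `Ψ_h` is injective for any Hermitian metric `h`. -/
private lemma herm_inj (h : V → V → ℂ) (hh : IsHermitianMetric h) :
    Function.Injective (PsiH h) := by
  obtain ⟨hadd, _, hherm, hpos⟩ := hh
  intro u u' huu
  by_contra hne
  have h1 : h u (u - u') = h u' (u - u') := by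
    have hv := congrFun huu (u - u')
    simp only [PsiH] at hv
    rw [hherm u (u - u'), hherm u' (u - u'), hv]
  have h2 : h (u - u' + u') (u - u') = h (u - u') (u - u') + h u' (u - u') :=
    hadd _ _ _
  rw [sub_add_cancel] at h2
  have h3 : h (u - u') (u - u') = 0 := by linear_combination h1 - h2
  have h4 := hpos (u - u') (sub_ne_zero.mpr hne)
  rw [h3] at h4
  simp at h4

/-- Let `F` be a regular semisimple endomorphism of `V` symmetric with respect to the
non-degenerate symmetric bilinear form `C`.  Then there is a unique Hermitian metric
`h^can` on `V` which is compatible with `C` and for which the eigen decomposition of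
`F` is orthogonal. -/
theorem existsUnique_canonical_compatible_metric
    (C : V → V → ℂ) (hC : IsNondegSymmBilin C) (F : V →ₗ[ℂ] V)
    (hsymm : ∀ u v : V, C (F u) v = C u (F v))
    (hreg : ∃ (e : Module.Basis (Fin (Module.finrank ℂ V)) ℂ V)
        (α : Fin (Module.finrank ℂ V) → ℂ),
      Function.Injective α ∧ ∀ i, F (e i) = α i • e i) :
    ∃! h : V → V → ℂ, IsHermitianMetric h ∧ Compatible h C ∧
      ∀ α β : ℂ, α ≠ β → ∀ u v : V, F u = α • u → F v = β • v → h u v = 0 := by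
  classical
  obtain ⟨e, α, hα, hFe⟩ := hreg
  obtain ⟨Cadd, Csmul, Csym, Cnondeg⟩ := hC
  -- second-argument linearity of C
  have Cadd' : ∀ u v w : V, C u (v + w) = C u v + C u w := fun u v w => by
    rw [Csym, Cadd, Csym v u, Csym w u]
  have Csmul' : ∀ (a : ℂ) (u v : V), C u (a • v) = a * C u v := fun a u v => by
    rw [Csym, Csmul, Csym v u]
  -- off-diagonal vanishing of C on the eigenbasis
  have key : ∀ i j, i ≠ j → C (e i) (e j) = 0 := by
    intro i j hij
    have h1 : α i * C (e i) (e j) = α j * C (e i) (e j) := by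
      calc α i * C (e i) (e j) = C (α i • e i) (e j) := (Csmul _ _ _).symm
        _ = C (F (e i)) (e j) := by rw [hFe]
        _ = C (e i) (F (e j)) := hsymm _ _
        _ = C (e i) (α j • e j) := by rw [hFe]
        _ = α j * C (e i) (e j) := Csmul' _ _ _
    have h2 : (α i - α j) * C (e i) (e j) = 0 := by linear_combination h1
    rcases mul_eq_zero.mp h2 with h3 | h3
    · exact absurd (sub_eq_zero.mp h3) (hα.ne hij)
    · exact h3
  -- expansion of C in coordinates
  have hexp : ∀ u v : V, C u v = ∑ i, e.repr u i * (e.repr v i * C (e i) (e i)) := by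
    intro u v
    conv_lhs => rw [← e.sum_repr u]
    rw [addSmul_sum _ (fun w => C w v) (fun a b => Cadd a b v)
      (fun a w => Csmul a w v) _ _]
    refine Finset.sum_congr rfl fun i _ => ?_
    congr 1
    conv_lhs => rw [← e.sum_repr v]
    rw [addSmul_sum _ (fun w => C (e i) w) (Cadd' (e i)) (fun a w => Csmul' a (e i) w) _ _]
    rw [Finset.sum_eq_single i]
    · intro j _ hji
      rw [key i j (Ne.symm hji), mul_zero]
    · intro hi; exact absurd (Finset.mem_univ i) hi
  have hc : ∀ i, C (e i) (e i) ≠ 0 := by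
    intro i h0
    refine e.ne_zero i (Cnondeg _ fun u => ?_)
    rw [hexp]
    refine Finset.sum_eq_zero fun j _ => ?_
    by_cases hji : i = j
    · subst hji; rw [h0, mul_zero, mul_zero]
    · rw [Module.Basis.repr_self, Finsupp.single_apply, if_neg hji]
      push_cast; ring
  -- notation
  set r : Fin (Module.finrank ℂ V) → ℝ := fun i => ‖C (e i) (e i)‖ with hrdef
  have hrpos : ∀ i, 0 < r i := fun i => norm_pos_iff.mpr (hc i)
  have hrne : ∀ i, ((r i : ℂ)) ≠ 0 := fun i => by
    exact_mod_cast Complex.ofReal_ne_zero.mpr (ne_of_gt (hrpos i))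
  have hcc : ∀ i, C (e i) (e i) * starRingEnd ℂ (C (e i) (e i)) = (r i : ℂ) ^ 2 := by
    intro i
    rw [Complex.mul_conj, hrdef]
    norm_cast
    exact (Complex.sq_norm _).symm
  -- the canonical metric
  set h : V → V → ℂ := fun u v => ∑ i, e.repr u i * starRingEnd ℂ (e.repr v i) * (r i : ℂ)
    with hhdef
  -- h in coordinates of sums
  have hrepr : ∀ (a : Fin (Module.finrank ℂ V) → ℂ) j, e.repr (∑ i, a i • e i) j = a j := by
    intro a j; rw [e.repr_sum_self]
  -- eigen-coordinates
  have heig : ∀ (γ : ℂ) (u : V), F u = γ • u → ∀ i, α i ≠ γ → e.repr u i = 0 := by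
    intro γ u hu i hi
    have h1 : F u = ∑ j, (α j * e.repr u j) • e j := by
      conv_lhs => rw [← e.sum_repr u]
      rw [map_sum]
      refine Finset.sum_congr rfl fun j _ => ?_
      rw [map_smul, hFe, smul_smul, mul_comm]
    have h2 : γ • u = ∑ j, (γ * e.repr u j) • e j := by
      conv_lhs => rw [← e.sum_repr u, Finset.smul_sum]
      refine Finset.sum_congr rfl fun j _ => ?_
      rw [smul_smul]
    have h3 : α i * e.repr u i = γ * e.repr u i := by
      have h12 := congrArg (fun w => e.repr w i) (h1.symm.trans (hu.trans h2))
      simpa only [hrepr] using h12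
    have h4 : (α i - γ) * e.repr u i = 0 := by linear_combination h3
    rcases mul_eq_zero.mp h4 with h5 | h5
    · exact absurd (sub_eq_zero.mp h5) hi
    · exact h5
  -- IsHermitianMetric h
  have hmet : IsHermitianMetric h := by
    refine ⟨?_, ?_, ?_, ?_⟩
    · intro u v w
      simp only [hhdef, map_add, Finsupp.add_apply, ← Finset.sum_add_distrib]
      refine Finset.sum_congr rfl fun i _ => ?_; ring
    · intro a u v
      simp only [hhdef, map_smul, Finsupp.smul_apply, smul_eq_mul, Finset.mul_sum]
      refine Finset.sum_congr rfl fun i _ => ?_; ring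
    · intro u v
      simp only [hhdef, map_sum, map_mul, Complex.conj_conj, Complex.conj_ofReal]
      refine Finset.sum_congr rfl fun i _ => ?_; ring
    · intro v hv
      have hterm : ∀ i, e.repr v i * starRingEnd ℂ (e.repr v i) * (r i : ℂ)
          = ((Complex.normSq (e.repr v i) * r i : ℝ) : ℂ) := by
        intro i; rw [Complex.mul_conj]; push_cast; ring
      simp only [hhdef, hterm]
      rw [Complex.re_sum]
      simp only [Complex.ofReal_re]
      obtain ⟨i, hi⟩ : ∃ i, e.repr v i ≠ 0 := by
        by_contra hall
        push_neg at hall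
        apply hv
        have : e.repr v = 0 := Finsupp.ext fun i => hall i
        simpa [this] using (e.sum_repr v).symm
      refine Finset.sum_pos' (fun j _ => mul_nonneg (Complex.normSq_nonneg _) (hrpos j).le)
        ⟨i, Finset.mem_univ i, mul_pos (Complex.normSq_pos.mpr hi) (hrpos i)⟩
  have hinj : Function.Injective (PsiH h) := herm_inj h hmet
  -- preimages under Ψ_h of the functionals C u
  set W : V → V := fun u => ∑ i, (starRingEnd ℂ (e.repr u i * C (e i) (e i)) / (r i : ℂ)) • e i
    with hWdef
  have hWrepr : ∀ u i, e.repr (W u) i = starRingEnd ℂ (e.repr u i * C (e i) (e i)) / (r i : ℂ) := by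
    intro u i; rw [hWdef]; exact hrepr _ i
  have hPsiW : ∀ u, PsiH h (W u) = C u := by
    intro u
    funext v
    show h v (W u) = C u v
    rw [hexp u v, hhdef]
    refine Finset.sum_congr rfl fun i _ => ?_
    rw [hWrepr]
    simp only [map_div₀, map_mul, Complex.conj_conj, Complex.conj_ofReal]
    field_simp [hrne i]
  have hinvW : ∀ u, Function.invFun (PsiH h) (C u) = W u := by
    intro u
    rw [← hPsiW u]
    exact Function.leftInverse_invFun hinj (W u)
  have hcompat : Compatible h C := by
    intro u v
    show h (Function.invFun (PsiH h) (C v)) (Function.invFun (PsiH h) (C u)) = h u v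
    rw [hinvW, hinvW, hhdef]
    refine Finset.sum_congr rfl fun i _ => ?_
    rw [hWrepr, hWrepr]
    simp only [map_div₀, map_mul, Complex.conj_conj, Complex.conj_ofReal]
    field_simp [hrne i]
    linear_combination (e.repr u i * starRingEnd ℂ (e.repr v i)) * hcc i
  have horth : ∀ β γ : ℂ, β ≠ γ → ∀ u v : V, F u = β • u → F v = γ • v → h u v = 0 := by
    intro β γ hbg u v hu hv
    rw [hhdef]
    refine Finset.sum_eq_zero fun i _ => ?_
    by_cases hib : α i = β
    · have : e.repr v i = 0 := heig γ v hv i (by rw [hib]; exact hbg)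
      rw [this]; simp
    · rw [heig β u hu i hib]; ring
  refine ⟨h, ⟨hmet, hcompat, horth⟩, ?_⟩
  -- uniqueness
  rintro h' ⟨⟨h'add, h'smul, h'herm, h'pos⟩, h'compat, h'orth⟩
  have h'inj : Function.Injective (PsiH h') := herm_inj h' ⟨h'add, h'smul, h'herm, h'pos⟩
  -- expansion of h' in coordinates
  have h'exp : ∀ u v : V,
      h' u v = ∑ i, e.repr u i * starRingEnd ℂ (e.repr v i) * h' (e i) (e i) := by
    intro u v
    have e1 : ∀ w x : V, h' w x = ∑ i, e.repr w i * h' (e i) x := by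
      intro w x
      conv_lhs => rw [← e.sum_repr w]
      exact addSmul_sum _ (fun y => h' y x) (fun a b => h'add a b x)
        (fun a y => h'smul a y x) _ _
    have e2 : ∀ i, h' (e i) v = ∑ j, starRingEnd ℂ (e.repr v j) * h' (e i) (e j) := by
      intro i
      rw [h'herm, e1 v (e i), map_sum]
      refine Finset.sum_congr rfl fun j _ => ?_
      rw [map_mul, ← h'herm]
    rw [e1 u v]
    refine Finset.sum_congr rfl fun i _ => ?_
    rw [e2 i, Finset.mul_sum]
    rw [Finset.sum_eq_single i]
    · ring
    · intro j _ hji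
      rw [h'orth (α i) (α j) (hα.ne (Ne.symm hji)) (e i) (e j) (hFe i) (hFe j)]
      ring
    · intro hi; exact absurd (Finset.mem_univ i) hi
  -- the diagonal values of h'
  have hρconj : ∀ i, starRingEnd ℂ (h' (e i) (e i)) = h' (e i) (e i) := fun i => (h'herm (e i) (e i)).symm
  have hρre : ∀ i, 0 < (h' (e i) (e i)).re := fun i => h'pos (e i) (e.ne_zero i)
  have hρne : ∀ i, h' (e i) (e i) ≠ 0 := by
    intro i h0
    have := hρre i
    rw [h0] at this
    simp at this
  -- compatibility forces h' (e i) (e i) = r i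
  have hρr : ∀ i, h' (e i) (e i) = (r i : ℂ) := by
    intro i
    set w : V := (starRingEnd ℂ (C (e i) (e i)) / h' (e i) (e i)) • e i with hwdef
    have hwrepr : ∀ j, e.repr w j =
        if j = i then starRingEnd ℂ (C (e i) (e i)) / h' (e i) (e i) else 0 := by
      intro j
      rw [hwdef, map_smul, Finsupp.smul_apply, Module.Basis.repr_self, Finsupp.single_apply,
        smul_eq_mul]
      by_cases hji : j = i
      · simp [hji]
      · simp [hji, Ne.symm hji]
    have hPsiw : PsiH h' w = C (e i) := by
      funext v
      show h' v w = C (e i) v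
      rw [h'exp v w, hexp (e i) v]
      refine Finset.sum_congr rfl fun j _ => ?_
      rw [hwrepr, Module.Basis.repr_self, Finsupp.single_apply]
      by_cases hji : j = i
      · subst hji
        rw [if_pos rfl, if_pos rfl, map_div₀, Complex.conj_conj, hρconj]
        field_simp [hρne j]
      · rw [if_neg hji, if_neg (fun hh => hji hh.symm)]
        simp
    have hcomp := h'compat (e i) (e i)
    have hinvw : Function.invFun (PsiH h') (C (e i)) = w := by
      rw [← hPsiw]
      exact Function.leftInverse_invFun h'inj w
    rw [show dualMetric h' (C (e i)) (C (e i))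
        = h' (Function.invFun (PsiH h') (C (e i))) (Function.invFun (PsiH h') (C (e i)))
        from rfl, hinvw] at hcomp
    -- h' w w = h' (e i) (e i)
    have hww : h' w w = (r i : ℂ) ^ 2 / h' (e i) (e i) := by
      rw [h'exp w w]
      rw [Finset.sum_eq_single i]
      · rw [hwrepr, if_pos rfl, map_div₀, Complex.conj_conj, hρconj]
        field_simp [hρne i]
        linear_combination hcc i
      · intro j _ hji
        rw [hwrepr, if_neg hji]
        simp
      · intro hi; exact absurd (Finset.mem_univ i) hi
    rw [hww] at hcomp
    -- now (r i)^2 / h' (e i) (e i) = h' (e i) (e i), so h' (e i) (e i) ^ 2 = (r i)^2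
    have hsq : h' (e i) (e i) ^ 2 = (r i : ℂ) ^ 2 := by
      field_simp [hρne i] at hcomp
      linear_combination -hcomp
    -- h' (e i) (e i) is a positive real
    have him : (h' (e i) (e i)).im = 0 := Complex.conj_eq_iff_im.mp (hρconj i)
    have hρreal : h' (e i) (e i) = ((h' (e i) (e i)).re : ℂ) := by
      exact (Complex.ext_iff.mpr ⟨rfl, by simp [him]⟩)
    rw [hρreal] at hsq
    have hsq' : ((h' (e i) (e i)).re) ^ 2 = (r i) ^ 2 := by
      exact_mod_cast hsq
    have hfac : ((h' (e i) (e i)).re - r i) * ((h' (e i) (e i)).re + r i) = 0 := by linear_combination hsq'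
    rcases mul_eq_zero.mp hfac with hf | hf
    · rw [hρreal]
      norm_cast
      linarith [sub_eq_zero.mp hf]
    · exfalso
      have : (h' (e i) (e i)).re = - r i := by linarith
      have := hρre i
      rw [‹(h' (e i) (e i)).re = - r i›] at this
      linarith [hrpos i]
  funext u v
  rw [h'exp u v, hhdef]
  refine Finset.sum_congr rfl fun i _ => ?_
  rw [hρr i]
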